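/- With b_opt = ((1/SNR)·I + H·Hᵀ)⁻¹·H·a, the minimized value ‖Hᵀb_opt − a‖² + (1/SNR)‖b_opt‖² equals aᵀ(I + SNR·Hᵀ·H)⁻¹a. -/

import Mathlib

open Matrix

lemma dot_mulVec_self {p q : ℕ} (M : Matrix (Fin p) (Fin q) ℝ) (a : Fin q → ℝ) :
    dotProduct (M.mulVec a) (M.mulVec a)
      = dotProduct a ((M.transpose * M).mulVec a) := by
  rw [← Matrix.mulVec_mulVec, Matrix.mulVec_transpose, dotProduct_mulVec]
  exact dotProduct_comm _ _

/-- the minimized value equals aᵀ(I + SNR·Hᵀ·H)⁻¹a. -/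
theorem stmt3 (m k : ℕ) (H : Matrix (Fin m) (Fin k) ℝ) (a : Fin k → ℝ)
    (SNR : ℝ) (hSNR : 0 < SNR)
    (bopt : Fin m → ℝ)
    (hbopt : bopt = ((1 / SNR) • (1 : Matrix (Fin m) (Fin m) ℝ)
        + H * H.transpose)⁻¹.mulVec (H.mulVec a)) :
    (∑ j, ((H.transpose.mulVec bopt) j - a j) ^ 2) + (1 / SNR) * ∑ i, (bopt i) ^ 2
      = dotProduct a (((1 : Matrix (Fin k) (Fin k) ℝ) + SNR • (H.transpose * H))⁻¹.mulVec a) := by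
  have hS : SNR ≠ 0 := ne_of_gt hSNR
  set A : Matrix (Fin m) (Fin m) ℝ := (1 / SNR) • (1 : Matrix (Fin m) (Fin m) ℝ) + H * H.transpose with hAdef
  set B : Matrix (Fin k) (Fin k) ℝ := (1 : Matrix (Fin k) (Fin k) ℝ) + SNR • (H.transpose * H) with hBdef
  -- positive definiteness
  have hsmul1 : ((1 / SNR) • (1 : Matrix (Fin m) (Fin m) ℝ)).PosDef := by
    rw [Matrix.posDef_iff_dotProduct_mulVec]
    constructor
    · simp [Matrix.IsHermitian, Matrix.conjTranspose_smul]
    · intro x hx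
      have h1 : ((1 / SNR) • (1 : Matrix (Fin m) (Fin m) ℝ)).mulVec x = (1 / SNR) • x := by
        simp [Matrix.smul_mulVec]
      rw [h1]
      have hxx : 0 < dotProduct (star x) x := dotProduct_star_self_pos_iff.mpr hx
      have h2 : dotProduct (star x) ((1 / SNR) • x)
          = (1 / SNR) * dotProduct (star x) x := by
        simp [smul_eq_mul]
      rw [h2]
      positivity
  have hHHt : (H * H.transpose).PosSemidef := by
    have := Matrix.posSemidef_self_mul_conjTranspose H
    rwa [Matrix.conjTranspose_eq_transpose_of_trivial] at this
  have hHtH : (H.transpose * H).PosSemidef := by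
    have := Matrix.posSemidef_conjTranspose_mul_self H
    rwa [Matrix.conjTranspose_eq_transpose_of_trivial] at this
  have hA : A.PosDef := hsmul1.add_posSemidef hHHt
  have hsps : (SNR • (H.transpose * H)).PosSemidef := by
    rw [Matrix.posSemidef_iff_dotProduct_mulVec]
    constructor
    · show (SNR • (H.transpose * H)).conjTranspose = _
      rw [Matrix.conjTranspose_smul, hHtH.1.eq]
      simp
    · intro x
      rw [Matrix.smul_mulVec, dotProduct_smul, smul_eq_mul]
      exact mul_nonneg hSNR.le (hHtH.dotProduct_mulVec_nonneg x)
  have hB : B.PosDef := Matrix.PosDef.add_posSemidef Matrix.PosDef.one hsps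
  have hAu : IsUnit A.det := (Matrix.isUnit_iff_isUnit_det _).1 hA.isUnit
  have hBu : IsUnit B.det := (Matrix.isUnit_iff_isUnit_det _).1 hB.isUnit
  -- symmetry
  have hAsymm : A.transpose = A := by
    simp [hAdef, Matrix.transpose_add, Matrix.transpose_smul, Matrix.transpose_mul]
  have hBsymm : B.transpose = B := by
    simp [hBdef, Matrix.transpose_add, Matrix.transpose_smul, Matrix.transpose_mul]
  have hAisymm : A⁻¹.transpose = A⁻¹ := by rw [Matrix.transpose_nonsing_inv, hAsymm]
  have hBisymm : B⁻¹.transpose = B⁻¹ := by rw [Matrix.transpose_nonsing_inv, hBsymm]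
  -- key identity HᵀA = (1/SNR) • (B Hᵀ)
  have hkey0 : H.transpose * A = (1 / SNR) • (B * H.transpose) := by
    rw [hAdef, hBdef]
    rw [Matrix.mul_add, Matrix.add_mul, Matrix.mul_smul, Matrix.smul_mul, smul_add,
      Matrix.one_mul, Matrix.mul_one, smul_smul, one_div, inv_mul_cancel₀ hS, one_smul,
      ← Matrix.mul_assoc]
  have hBHt : B * H.transpose = SNR • (H.transpose * A) := by
    rw [hkey0, smul_smul, mul_one_div, div_self hS, one_smul]
  have hkey : H.transpose * A⁻¹ = SNR • (B⁻¹ * H.transpose) := by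
    have h1 : B * (H.transpose * A⁻¹) = SNR • H.transpose := by
      rw [← Matrix.mul_assoc, hBHt, Matrix.smul_mul, Matrix.mul_assoc,
        Matrix.mul_nonsing_inv _ hAu, Matrix.mul_one]
    calc H.transpose * A⁻¹ = B⁻¹ * (B * (H.transpose * A⁻¹)) := by
          rw [← Matrix.mul_assoc, Matrix.nonsing_inv_mul _ hBu, Matrix.one_mul]
      _ = B⁻¹ * (SNR • H.transpose) := by rw [h1]
      _ = SNR • (B⁻¹ * H.transpose) := by rw [Matrix.mul_smul]
  -- HᵀA⁻¹H = 1 - B⁻¹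
  have hkey2 : H.transpose * A⁻¹ * H = 1 - B⁻¹ := by
    rw [hkey, Matrix.smul_mul, Matrix.mul_assoc]
    have h1 : B⁻¹ * B = 1 := Matrix.nonsing_inv_mul _ hBu
    rw [hBdef] at h1
    rw [Matrix.mul_add, Matrix.mul_one, Matrix.mul_smul] at h1
    rw [← h1]; abel
  -- express bopt
  have hbopt' : bopt = (A⁻¹ * H).mulVec a := by rw [hbopt, Matrix.mulVec_mulVec]
  have hres : H.transpose.mulVec bopt = (1 - B⁻¹).mulVec a := by
    rw [hbopt', Matrix.mulVec_mulVec, ← Matrix.mul_assoc, hkey2]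
  -- rewrite sums as dot products
  have e1 : (∑ j, ((H.transpose.mulVec bopt) j - a j) ^ 2)
      = dotProduct (B⁻¹.mulVec a) (B⁻¹.mulVec a) := by
    have h1 : ∀ j, (H.transpose.mulVec bopt) j - a j = -(B⁻¹.mulVec a) j := by
      intro j
      rw [hres]
      simp [Matrix.sub_mulVec, Matrix.one_mulVec]
    simp only [h1]
    simp [dotProduct, sq]
  have e2 : (∑ i, (bopt i) ^ 2) = dotProduct bopt bopt := by
    simp [dotProduct, sq]
  rw [e1, e2, hbopt', dot_mulVec_self, dot_mulVec_self]
  -- matrix algebra for the second term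
  have hM2 : (A⁻¹ * H).transpose * (A⁻¹ * H) = SNR • (B⁻¹ * (1 - B⁻¹)) := by
    rw [Matrix.transpose_mul, hAisymm, hkey, Matrix.smul_mul, Matrix.mul_assoc B⁻¹,
      ← Matrix.mul_assoc H.transpose A⁻¹ H, hkey2]
  have hM1 : (B⁻¹).transpose * B⁻¹ = B⁻¹ * B⁻¹ := by rw [hBisymm]
  rw [hM1, hM2]
  have hscal : (1 / SNR) * dotProduct a ((SNR • (B⁻¹ * (1 - B⁻¹))).mulVec a)
      = dotProduct a ((B⁻¹ * (1 - B⁻¹)).mulVec a) := by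
    rw [Matrix.smul_mulVec, dotProduct_smul, smul_eq_mul, ← mul_assoc,
      one_div, inv_mul_cancel₀ hS, one_mul]
  have hfinal : B⁻¹ * B⁻¹ + B⁻¹ * (1 - B⁻¹) = B⁻¹ := by
    rw [Matrix.mul_sub, Matrix.mul_one]; abel
  rw [hscal, ← dotProduct_add, ← Matrix.add_mulVec, hfinal]
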